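/- Let M be an integer with 2 ≤ M ≤ 𝒩, let ζ ∈ ℂ be a primitive 2M-th root of unity, and let a_1,…,a_l ∈ ℂ be nonzero with a_c^{2M} ≠ 1. Let φ : L → ℂ be the unique ring homomorphism with φ(u_i) = a_i^{1−M}, φ(x_i) = a_i, φ(d) = ζ^{−1}, φ(y) = (a_c − a_c^{−1})/(a_c^{M} − a_c^{−M}), φ(w^k_j) = 1 for j ≤ M−1 and φ(w^k_j) = 0 for j ≥ M. Then the ideal of L generated by ∏_{M'=2}^{𝒩}( u_i − x_i^{1−M'} ) (for 1 ≤ i ≤ l), ∏_{M'=2}^{𝒩}( y·(x_c^{M'} − x_c^{−M'}) − (x_c − x_c^{−1}) ), ∏_{M'=2}^{2𝒩}( d^{M'} − 1 ), w^k_1 − 1 (for 1 ≤ k ≤ l), and w^k_j·(w^k_j − 1) (for 1 ≤ k ≤ l, 2 ≤ j ≤ 𝒩−1) is contained in ker φ. (This is the inclusion of the non-semisimple refined ideal in the kernel of each root-of-unity ADO specialisation.) -/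
import Mathlib


set_option synthInstance.maxHeartbeats 1000000
set_option maxHeartbeats 1000000
set_option maxSynthPendingDepth 10

/-- The base ring `ℤ[u_1^{±1},…,u_l^{±1},x_1^{±1},…,x_l^{±1},d^{±1}]`, modelled as the
group algebra of the free abelian group on the `u`'s (`Sum.inl`), the `x`'s
(`Sum.inr ∘ Sum.inl`) and `d` (`Sum.inr (Sum.inr ())`). -/
abbrev BRing (l : ℕ) : Type := AddMonoidAlgebra ℤ ((Fin l ⊕ Fin l ⊕ Unit) →₀ ℤ)

/-- The ring `L`: the polynomial ring over `BRing l` in the variables `y` (`Sum.inl`)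
and `w^k_j` for `1 ≤ k ≤ l`, `1 ≤ j ≤ 𝒩−1` (`Sum.inr (k, j)`, where `j : Fin (𝒩−1)`
stands for the weight index `j+1`). -/
abbrev LRing (l 𝒩 : ℕ) : Type :=
  MvPolynomial (Unit ⊕ Fin l × Fin (𝒩 - 1)) (BRing l)

/-- The monomial `u_i^n` in `L`. -/
noncomputable def uVar (l 𝒩 : ℕ) (i : Fin l) (n : ℤ) : LRing l 𝒩 :=
  MvPolynomial.C (AddMonoidAlgebra.single (Finsupp.single (Sum.inl i) n) 1)

/-- The monomial `x_i^n` in `L`. -/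
noncomputable def xVar (l 𝒩 : ℕ) (i : Fin l) (n : ℤ) : LRing l 𝒩 :=
  MvPolynomial.C (AddMonoidAlgebra.single (Finsupp.single (Sum.inr (Sum.inl i)) n) 1)

/-- The monomial `d^n` in `L`. -/
noncomputable def dVar (l 𝒩 : ℕ) (n : ℤ) : LRing l 𝒩 :=
  MvPolynomial.C (AddMonoidAlgebra.single (Finsupp.single (Sum.inr (Sum.inr ())) n) 1)

/-- The variable `y` in `L`. -/
noncomputable def yVar (l 𝒩 : ℕ) : LRing l 𝒩 := MvPolynomial.X (Sum.inl ())

/-- The variable `w^k_j` in `L` (`j : Fin (𝒩−1)` stands for the weight index `j+1`). -/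
noncomputable def wVar (l 𝒩 : ℕ) (k : Fin l) (j : Fin (𝒩 - 1)) : LRing l 𝒩 :=
  MvPolynomial.X (Sum.inr (k, j))

/-- The non-semisimple refined generators: `∏_{M'=2}^{𝒩}( u_i − x_i^{1−M'} )`,
`∏_{M'=2}^{𝒩}( y·(x_c^{M'} − x_c^{−M'}) − (x_c − x_c^{−1}) )`,
`∏_{M'=2}^{2𝒩}( d^{M'} − 1 )`, `w^k_1 − 1`, and `w^k_j·(w^k_j − 1)` for `2 ≤ j ≤ 𝒩−1`. -/
noncomputable def refADOSet (l 𝒩 : ℕ) (c : Fin l) : Set (LRing l 𝒩) :=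
  (Set.range fun i : Fin l =>
    ∏ M' ∈ Finset.Icc 2 𝒩, (uVar l 𝒩 i 1 - xVar l 𝒩 i (1 - (M' : ℤ)))) ∪
  {∏ M' ∈ Finset.Icc 2 𝒩,
      (yVar l 𝒩 * (xVar l 𝒩 c (M' : ℤ) - xVar l 𝒩 c (-(M' : ℤ))) -
        (xVar l 𝒩 c 1 - xVar l 𝒩 c (-1)))} ∪
  {∏ M' ∈ Finset.Icc 2 (2 * 𝒩), (dVar l 𝒩 (M' : ℤ) - 1)} ∪
  {p | ∃ k : Fin l, ∃ j : Fin (𝒩 - 1), (j : ℕ) = 0 ∧ p = wVar l 𝒩 k j - 1} ∪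
  {p | ∃ k : Fin l, ∃ j : Fin (𝒩 - 1), 1 ≤ (j : ℕ) ∧
    p = wVar l 𝒩 k j * (wVar l 𝒩 k j - 1)}

lemma xVar_mul (l 𝒩 : ℕ) (i : Fin l) (m n : ℤ) :
    xVar l 𝒩 i m * xVar l 𝒩 i n = xVar l 𝒩 i (m + n) := by
  unfold xVar
  rw [← map_mul, AddMonoidAlgebra.single_mul_single, one_mul, ← Finsupp.single_add]

lemma xVar_zero (l 𝒩 : ℕ) (i : Fin l) : xVar l 𝒩 i 0 = 1 := by
  unfold xVar
  rw [Finsupp.single_zero, ← AddMonoidAlgebra.one_def, map_one]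

lemma dVar_mul (l 𝒩 : ℕ) (m n : ℤ) :
    dVar l 𝒩 m * dVar l 𝒩 n = dVar l 𝒩 (m + n) := by
  unfold dVar
  rw [← map_mul, AddMonoidAlgebra.single_mul_single, one_mul, ← Finsupp.single_add]

lemma dVar_zero (l 𝒩 : ℕ) : dVar l 𝒩 0 = 1 := by
  unfold dVar
  rw [Finsupp.single_zero, ← AddMonoidAlgebra.one_def, map_one]

lemma dVar_pow (l 𝒩 : ℕ) (n : ℕ) : dVar l 𝒩 (n : ℤ) = dVar l 𝒩 1 ^ n := by
  induction n with
  | zero => simpa using dVar_zero l 𝒩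
  | succ n ih =>
    rw [pow_succ, ← ih, dVar_mul]
    norm_num

lemma xVar_pow (l 𝒩 : ℕ) (i : Fin l) (n : ℕ) :
    xVar l 𝒩 i (n : ℤ) = xVar l 𝒩 i 1 ^ n := by
  induction n with
  | zero => simpa using xVar_zero l 𝒩 i
  | succ n ih =>
    rw [pow_succ, ← ih, xVar_mul]
    norm_num

/-- Let `2 ≤ M ≤ 𝒩`, let `ζ ∈ ℂ` be a primitive `2M`-th root of unity, and
let `a_1,…,a_l ∈ ℂ` be nonzero with `a_c^{2M} ≠ 1`.  Let `φ : L → ℂ` be the unique ring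
homomorphism with `φ(u_i) = a_i^{1−M}`, `φ(x_i) = a_i`, `φ(d) = ζ⁻¹`,
`φ(y) = (a_c − a_c^{−1})/(a_c^{M} − a_c^{−M})`, `φ(w^k_j) = 1` for `j ≤ M−1` and
`φ(w^k_j) = 0` for `j ≥ M`.  Then the non-semisimple refined ideal is contained in
`ker φ`. -/
theorem refined_nonsemisimple_ideal_le_ker_ADO_specialisation
    (l 𝒩 : ℕ) (hl : 1 ≤ l) (h𝒩 : 2 ≤ 𝒩) (c : Fin l)
    (M : ℕ) (hM2 : 2 ≤ M) (hM𝒩 : M ≤ 𝒩)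
    (ζ : ℂ) (hζ : IsPrimitiveRoot ζ (2 * M))
    (a : Fin l → ℂ) (ha : ∀ i, a i ≠ 0) (hac : a c ^ (2 * M) ≠ 1)
    (φ : LRing l 𝒩 →+* ℂ)
    (hu : ∀ i, φ (uVar l 𝒩 i 1) = a i ^ (1 - (M : ℤ)))
    (hx : ∀ i, φ (xVar l 𝒩 i 1) = a i)
    (hd : φ (dVar l 𝒩 1) = ζ⁻¹)
    (hy : φ (yVar l 𝒩) = (a c - (a c)⁻¹) / (a c ^ (M : ℤ) - a c ^ (-(M : ℤ))))
    (hw : ∀ k j, φ (wVar l 𝒩 k j) = if (j : ℕ) + 1 ≤ M - 1 then 1 else 0) :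
    Ideal.span (refADOSet l 𝒩 c) ≤ RingHom.ker φ := by
  -- φ on integer powers of x
  have hxnat : ∀ (i : Fin l) (n : ℕ), φ (xVar l 𝒩 i (n : ℤ)) = a i ^ n := by
    intro i n
    rw [xVar_pow, map_pow, hx]
  have hx' : ∀ (i : Fin l) (n : ℤ), φ (xVar l 𝒩 i n) = a i ^ n := by
    intro i n
    have key : ∀ m : ℕ, φ (xVar l 𝒩 i (-(m : ℤ))) = (a i ^ m)⁻¹ := by
      intro m
      have h1 : φ (xVar l 𝒩 i (m : ℤ)) * φ (xVar l 𝒩 i (-(m : ℤ))) = 1 := by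
        rw [← map_mul, xVar_mul]
        simp [xVar_zero]
      rw [hxnat] at h1
      exact (inv_eq_of_mul_eq_one_right h1).symm
    cases n with
    | ofNat n => simpa using (hxnat i n).trans (zpow_natCast (a i) n).symm
    | negSucc n =>
      have : (Int.negSucc n) = -((n + 1 : ℕ) : ℤ) := by
        simp [Int.negSucc_eq]
      rw [this, key, zpow_neg, zpow_natCast]
  rw [Ideal.span_le]
  intro p hp
  rw [SetLike.mem_coe, RingHom.mem_ker]
  simp only [refADOSet, Set.mem_union, Set.mem_range, Set.mem_singleton_iff,
    Set.mem_setOf_eq] at hp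
  rcases hp with ((((⟨i, rfl⟩ | rfl) | rfl) | ⟨k, j, hj, rfl⟩) | ⟨k, j, hj, rfl⟩)
  · -- u generators
    rw [map_prod]
    refine Finset.prod_eq_zero (Finset.mem_Icc.mpr ⟨hM2, hM𝒩⟩) ?_
    rw [map_sub, hu, hx']
    exact sub_self _
  · -- y generator
    rw [map_prod]
    refine Finset.prod_eq_zero (Finset.mem_Icc.mpr ⟨hM2, hM𝒩⟩) ?_
    have hD : a c ^ (M : ℤ) - a c ^ (-(M : ℤ)) ≠ 0 := by
      intro h
      apply hac
      have h' : a c ^ (M : ℤ) = a c ^ (-(M : ℤ)) := sub_eq_zero.mp h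
      have : a c ^ ((2 * M : ℕ) : ℤ) = 1 := by
        have : ((2 * M : ℕ) : ℤ) = (M : ℤ) + M := by push_cast; ring
        rw [this, zpow_add₀ (ha c)]
        nth_rewrite 2 [h']
        rw [← zpow_add₀ (ha c)]
        simp
      rwa [zpow_natCast] at this
    simp only [map_sub, map_mul, hy, hx' c]
    rw [zpow_one, zpow_neg_one, div_mul_cancel₀ _ hD]
    exact sub_self _
  · -- d generator
    rw [map_prod]
    refine Finset.prod_eq_zero (i := 2 * M) (Finset.mem_Icc.mpr ⟨by omega, by omega⟩) ?_
    rw [map_sub, map_one, dVar_pow, map_pow, hd, inv_pow, hζ.pow_eq_one, inv_one]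
    exact sub_self _
  · -- w^k_1 − 1
    rw [map_sub, map_one, hw, if_pos (by omega)]
    exact sub_self _
  · -- w^k_j (w^k_j − 1)
    rw [map_mul, map_sub, map_one, hw]
    by_cases h : (j : ℕ) + 1 ≤ M - 1 <;> simp [h]
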